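/- Let K be an infinite field, let α, β ∈ K be non-zero, and let A_1, A_2, A_3 ∈ M_3(K) satisfy: σ_k(A_i) = 0 for k, i = 1,2,3; tr(A_iA_j) = 0 for 1 ≤ i < j ≤ 3; tr(A_i²A_j) = 0 for all 1 ≤ i ≠ j ≤ 3; tr(A_i²A_j²) = 0 for 1 ≤ i < j ≤ 3; and α·tr(A_1A_2A_3) + β·tr(A_1A_3A_2) = 0. Then every invariant r ∈ R_{3,3} of positive degree (equivalently, every invariant with zero constant term) vanishes at the point (A_1, A_2, A_3). -/

import Mathlib

open Matrix MvPolynomial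

noncomputable section

/-- Evaluation of a coordinate-ring element at a `d`-tuple of `n × n` matrices. -/
def evalPt {K : Type} [Field K] {n d : ℕ} (A : Fin d → Matrix (Fin n) (Fin n) K) :
    MvPolynomial (Fin d × Fin n × Fin n) K →+* K :=
  MvPolynomial.eval fun p => A p.1 p.2.1 p.2.2

/-- The algebra of invariants `R_{n,d}` of `d`-tuples of `n × n` matrices under
simultaneous conjugation. -/
def invRing (K : Type) [Field K] (n d : ℕ) :
    Subalgebra K (MvPolynomial (Fin d × Fin n × Fin n) K) where
  carrier := {f | ∀ (g : GL (Fin n) K) (A : Fin d → Matrix (Fin n) (Fin n) K),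
      evalPt (fun r => (g : Matrix (Fin n) (Fin n) K) * A r *
        ((↑g⁻¹ : Matrix (Fin n) (Fin n) K))) f = evalPt A f}
  add_mem' := by intro a b ha hb g A; simp only [map_add, ha g A, hb g A]
  mul_mem' := by intro a b ha hb g A; simp only [_root_.map_mul, ha g A, hb g A]
  one_mem' := by intro g A; simp only [_root_.map_one]
  zero_mem' := by intro g A; simp only [map_zero]
  algebraMap_mem' := by intro r g A; simp [evalPt, MvPolynomial.algebraMap_eq]

/-- The generic `n × n` matrices `X_r`. -/
def genMat (K : Type) [Field K] (n d : ℕ) (r : Fin d) :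
    Matrix (Fin n) (Fin n) (MvPolynomial (Fin d × Fin n × Fin n) K) :=
  Matrix.of fun i j => MvPolynomial.X (r, i, j)

/-- The trace of a word in the generic matrices. -/
def trW (K : Type) [Field K] (n d : ℕ) (w : List (Fin d)) :
    MvPolynomial (Fin d × Fin n × Fin n) K :=
  Matrix.trace ((w.map (genMat K n d)).prod)

/-- `σ_k(M)`: the signed coefficients of the characteristic polynomial,
`det (λ E - M) = λ^n - σ_1(M) λ^{n-1} + ⋯ + (-1)^n σ_n(M)`. -/
def sigmaC {R : Type} [CommRing R] {n : ℕ} (k : ℕ) (M : Matrix (Fin n) (Fin n) R) : R :=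
  (-1) ^ k * (Matrix.charpoly M).coeff (n - k)

namespace Vanish

variable {K : Type} [Field K]






lemma charpoly_eq (M : Matrix (Fin 3) (Fin 3) K)
    (h : ∀ k : ℕ, 1 ≤ k → k ≤ 3 → sigmaC k M = 0) : M.charpoly = Polynomial.X ^ 3 := by
  have h1 := h 1 (by norm_num) (by norm_num)
  have h2 := h 2 (by norm_num) (by norm_num)
  have h3 := h 3 (by norm_num) (by norm_num)
  simp only [sigmaC] at h1 h2 h3
  norm_num at h1 h2 h3
  have hdeg : M.charpoly.natDegree = 3 := by
    simpa using M.charpoly_natDegree_eq_dim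
  have hmon : M.charpoly.Monic := M.charpoly_monic
  ext n
  rw [Polynomial.coeff_X_pow]
  rcases lt_trichotomy n 3 with hn | rfl | hn
  · interval_cases n <;> simp_all
  · simp only [if_pos rfl]
    have := hmon.coeff_natDegree
    rwa [hdeg] at this
  · rw [Polynomial.coeff_eq_zero_of_natDegree_lt (by omega), if_neg (by omega)]

lemma cube_eq_zero (M : Matrix (Fin 3) (Fin 3) K) (h : M.charpoly = Polynomial.X ^ 3) :
    M * M * M = 0 := by
  have := M.aeval_self_charpoly
  rw [h] at this
  simpa [pow_succ, Matrix.mul_assoc] using this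

lemma trace_eq_zero (M : Matrix (Fin 3) (Fin 3) K) (h : M.charpoly = Polynomial.X ^ 3) :
    Matrix.trace M = 0 := by
  have := Matrix.trace_eq_neg_charpoly_coeff M
  rw [h] at this
  simpa [Polynomial.coeff_X_pow] using this






/-- GL element whose matrix has prescribed linearly independent columns. -/
lemma exists_gl_cols (c : Fin 3 → (Fin 3 → K)) (hc : LinearIndependent K c) :
    ∃ g : GL (Fin 3) K, (g : Matrix (Fin 3) (Fin 3) K) = Matrix.of (fun i j => c j i) := by
  have hcard : Fintype.card (Fin 3) = Module.finrank K (Fin 3 → K) := by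
    simp [Module.finrank_fin_fun]
  let b : Module.Basis (Fin 3) K (Fin 3 → K) := basisOfLinearIndependentOfCardEqFinrank hc hcard
  have hb : ⇑b = c := coe_basisOfLinearIndependentOfCardEqFinrank hc hcard
  let e : Module.Basis (Fin 3) K (Fin 3 → K) := Pi.basisFun K (Fin 3)
  have hinv : Invertible (e.toMatrix b) := e.invertibleToMatrix b
  have heq : e.toMatrix b = Matrix.of (fun i j => c j i) := by
    ext i j
    rw [Module.Basis.toMatrix_apply]
    simp [e, hb]
  refine ⟨(unitOfInvertible (e.toMatrix b) : (Matrix (Fin 3) (Fin 3) K)ˣ), ?_⟩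
  simpa using heq

/-- product of three strictly upper triangular 3×3 matrices is zero -/
lemma triple_strict_upper (X Y Z : Matrix (Fin 3) (Fin 3) K)
    (hX : ∀ k l : Fin 3, ¬ k < l → X k l = 0) (hY : ∀ k l : Fin 3, ¬ k < l → Y k l = 0)
    (hZ : ∀ k l : Fin 3, ¬ k < l → Z k l = 0) : X * Y * Z = 0 := by
  have x10 := hX 1 0 (by decide); have x20 := hX 2 0 (by decide); have x21 := hX 2 1 (by decide)
  have x00 := hX 0 0 (by decide); have x11 := hX 1 1 (by decide); have x22 := hX 2 2 (by decide)
  have y10 := hY 1 0 (by decide); have y20 := hY 2 0 (by decide); have y21 := hY 2 1 (by decide)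
  have y00 := hY 0 0 (by decide); have y11 := hY 1 1 (by decide); have y22 := hY 2 2 (by decide)
  have z10 := hZ 1 0 (by decide); have z20 := hZ 2 0 (by decide); have z21 := hZ 2 1 (by decide)
  have z00 := hZ 0 0 (by decide); have z11 := hZ 1 1 (by decide); have z22 := hZ 2 2 (by decide)
  ext i j
  fin_cases i <;> fin_cases j <;>
    simp [Matrix.mul_apply, Fin.sum_univ_three, x10, x20, x21, x00, x11, x22,
      y10, y20, y21, y00, y11, y22, z10, z20, z21, z00, z11, z22]

lemma vecMulVec_mul (u v w z : Fin 3 → K) :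
    vecMulVec u v * vecMulVec w z = (v ⬝ᵥ w) • vecMulVec u z := by
  ext i j
  simp [Matrix.mul_apply, vecMulVec_apply, dotProduct, Fin.sum_univ_three]
  ring

lemma trace_vecMulVec (u v : Fin 3 → K) : Matrix.trace (vecMulVec u v) = v ⬝ᵥ u := by
  simp [Matrix.trace_fin_three, vecMulVec_apply, dotProduct, Fin.sum_univ_three]
  ring

/-- 3×3 matrix with square zero is an outer product -/
lemma rank_one_decomp (M : Matrix (Fin 3) (Fin 3) K) (h2 : M * M = 0) :
    ∃ u v : Fin 3 → K, M = vecMulVec u v := by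
  by_cases hM : M = 0
  · exact ⟨0, 0, by ext i j; simp [hM, vecMulVec_apply]⟩
  have hL : M.mulVecLin ∘ₗ M.mulVecLin = 0 := by
    rw [← Matrix.mulVecLin_mul, h2]; simp
  have hrk : LinearMap.range M.mulVecLin ≤ LinearMap.ker M.mulVecLin := by
    rintro x ⟨y, rfl⟩
    simpa using congrFun (congrArg (fun f => f.toFun) hL) y
  have hrank : Module.finrank K (LinearMap.range M.mulVecLin) ≤ 1 := by
    have h1 := LinearMap.finrank_range_add_finrank_ker M.mulVecLin
    have h2' : Module.finrank K (Fin 3 → K) = 3 := Module.finrank_fin_fun K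
    have h3 := Submodule.finrank_mono hrk
    omega
  -- nonzero column
  obtain ⟨p, q, hpq⟩ : ∃ p q, M p q ≠ 0 := by
    by_contra hc
    push_neg at hc
    exact hM (by ext i j; simp [hc])
  set u : Fin 3 → K := M.mulVec (Pi.single q 1) with hu
  have hune : u ≠ 0 := by
    intro h0
    apply hpq
    have := congrFun h0 p
    simpa [hu, Matrix.mulVec_single] using this
  have humem : u ∈ LinearMap.range M.mulVecLin := ⟨Pi.single q 1, rfl⟩
  have hspan : (K ∙ u) = LinearMap.range M.mulVecLin := by
    apply Submodule.eq_of_le_of_finrank_le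
    · simpa [Submodule.span_singleton_le_iff_mem] using humem
    · rwa [finrank_span_singleton hune]
  have hcol : ∀ j : Fin 3, ∃ c : K, M.mulVec (Pi.single j 1) = c • u := by
    intro j
    have : M.mulVec (Pi.single j 1) ∈ (K ∙ u) := by
      rw [hspan]; exact ⟨Pi.single j 1, rfl⟩
    rw [Submodule.mem_span_singleton] at this
    obtain ⟨a, ha⟩ := this
    exact ⟨a, ha.symm⟩
  choose v hv using hcol
  refine ⟨u, v, ?_⟩
  ext i j
  have := congrFun (hv j) i
  simp only [Matrix.mulVec_single_one, Matrix.col_apply] at this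
  simp [vecMulVec_apply, this, mul_comm]






def J3 (K : Type) [Field K] : Matrix (Fin 3) (Fin 3) K :=
  Matrix.of fun i j => if i.val + 1 = j.val then 1 else 0

lemma mul_cols (B : Matrix (Fin 3) (Fin 3) K) (c : Fin 3 → (Fin 3 → K)) (i l : Fin 3) :
    (B * Matrix.of (fun i j => c j i)) i l = (B *ᵥ (c l)) i := by
  simp [Matrix.mul_apply, Matrix.mulVec, dotProduct]

lemma trace_conj' (P Q X : Matrix (Fin 3) (Fin 3) K) (hPQ : P * Q = 1) :
    Matrix.trace (Q * X * P) = Matrix.trace X := by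
  rw [Matrix.trace_mul_comm, ← Matrix.mul_assoc, hPQ, Matrix.one_mul]

lemma conj_mul' (P Q X Y : Matrix (Fin 3) (Fin 3) K) (hPQ : P * Q = 1) :
    (Q * X * P) * (Q * Y * P) = Q * (X * Y) * P := by
  calc (Q * X * P) * (Q * Y * P) = Q * X * (P * Q) * Y * P := by noncomm_ring
    _ = Q * (X * Y) * P := by rw [hPQ]; noncomm_ring

lemma case1_upper (A B P Q : Matrix (Fin 3) (Fin 3) K)
    (hPQ : P * Q = 1)
    (hJ : Q * A * P = J3 K)
    (hB3 : B * B * B = 0)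
    (h1 : Matrix.trace (A * B) = 0)
    (h2 : Matrix.trace (A * A * B) = 0)
    (h4 : Matrix.trace (A * A * (B * B)) = 0) :
    ∀ k l : Fin 3, ¬ k < l → (Q * B * P) k l = 0 := by
  set N : Matrix (Fin 3) (Fin 3) K := Q * B * P with hN
  have hJN : Matrix.trace (J3 K * N) = 0 := by
    rw [← hJ, hN, conj_mul' P Q _ _ hPQ, trace_conj' P Q _ hPQ]; exact h1
  have hJJN : Matrix.trace (J3 K * J3 K * N) = 0 := by
    have e : J3 K * J3 K * N = Q * (A * A * B) * P := by
      rw [← hJ, hN, conj_mul' P Q _ _ hPQ, conj_mul' P Q _ _ hPQ]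
    rw [e, trace_conj' P Q _ hPQ]; exact h2
  have hJJNN : Matrix.trace (J3 K * J3 K * (N * N)) = 0 := by
    have e : J3 K * J3 K * (N * N) = Q * (A * A * (B * B)) * P := by
      rw [← hJ, hN, conj_mul' P Q _ _ hPQ, conj_mul' P Q _ _ hPQ, conj_mul' P Q _ _ hPQ]
    rw [e, trace_conj' P Q _ hPQ]; exact h4
  have hN3 : N * N * N = 0 := by
    rw [hN, conj_mul' P Q _ _ hPQ, conj_mul' P Q _ _ hPQ, hB3, Matrix.mul_zero, Matrix.zero_mul]
  clear_value N
  clear hJ hN hB3 h1 h2 h4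
  have e20 : N 2 0 = 0 := by
    have := hJJN
    simp only [J3, Matrix.trace_fin_three, Matrix.mul_apply, Fin.sum_univ_three,
      Matrix.of_apply] at this
    norm_num at this
    linear_combination this
  have e1 : N 1 0 + N 2 1 = 0 := by
    have := hJN
    simp only [J3, Matrix.trace_fin_three, Matrix.mul_apply, Fin.sum_univ_three,
      Matrix.of_apply] at this
    norm_num at this
    linear_combination this
  have e10 : N 1 0 = 0 := by
    have h3 : N 1 0 * N 1 0 = 0 := by
      have := hJJNN
      simp only [J3, Matrix.trace_fin_three, Matrix.mul_apply, Fin.sum_univ_three,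
        Matrix.of_apply] at this
      norm_num at this
      linear_combination N 1 0 * e1 - this + (N 0 0 + N 2 2) * e20
    exact pow_eq_zero_iff (two_ne_zero) |>.mp (by rw [pow_two]; exact h3)
  have e21 : N 2 1 = 0 := by linear_combination e1 - e10
  have hd : ∀ i : Fin 3, N i i ^ 3 = 0 → N i i = 0 := fun i h =>
    pow_eq_zero_iff (three_ne_zero) |>.mp h
  have d0 : N 0 0 = 0 := by
    have h := congrFun (congrFun hN3 0) 0
    simp only [Matrix.mul_apply, Fin.sum_univ_three, Matrix.zero_apply] at h
    rw [e10, e20, e21] at h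
    exact hd 0 (by linear_combination h)
  have d1 : N 1 1 = 0 := by
    have h := congrFun (congrFun hN3 1) 1
    simp only [Matrix.mul_apply, Fin.sum_univ_three, Matrix.zero_apply] at h
    rw [e10, e20, e21] at h
    exact hd 1 (by linear_combination h)
  have d2 : N 2 2 = 0 := by
    have h := congrFun (congrFun hN3 2) 2
    simp only [Matrix.mul_apply, Fin.sum_univ_three, Matrix.zero_apply] at h
    rw [e10, e20, e21] at h
    exact hd 2 (by linear_combination h)
  intro k l hkl
  fin_cases k <;> fin_cases l <;> first
    | exact absurd (by decide) hkl
    | assumption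










lemma case1_J3 (A : Matrix (Fin 3) (Fin 3) K) (h2 : A * A ≠ 0) (h3 : A * A * A = 0) :
    ∃ P Q : Matrix (Fin 3) (Fin 3) K, P * Q = 1 ∧ Q * P = 1 ∧ Q * A * P = J3 K := by
  obtain ⟨p, q, hpq⟩ : ∃ p q, (A * A) p q ≠ 0 := by
    by_contra hc
    push_neg at hc
    exact h2 (by ext i j; simp [hc])
  set w : Fin 3 → K := Pi.single q 1 with hw
  have hz2 : (A * A * A) *ᵥ w = 0 := by rw [h3, Matrix.zero_mulVec]
  have hz1 : (A * A * (A * A)) *ᵥ w = 0 := by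
    have : A * A * (A * A) = (A * A * A) * A := by noncomm_ring
    rw [this, h3, Matrix.zero_mul, Matrix.zero_mulVec]
  have hz3 : (A * (A * A)) *ᵥ w = 0 := by
    have : A * (A * A) = A * A * A := by noncomm_ring
    rw [this, h3, Matrix.zero_mulVec]
  have hc0' : (A * A) *ᵥ w ≠ 0 := by
    intro h0
    apply hpq
    have := congrFun h0 p
    simpa [hw, Matrix.mulVec_single] using this
  set c : Fin 3 → (Fin 3 → K) := ![(A * A) *ᵥ w, A *ᵥ w, w] with hcdef
  have hli : LinearIndependent K c := by
    rw [Fintype.linearIndependent_iff]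
    intro g hg
    have hg' : g 0 • ((A * A) *ᵥ w) + g 1 • (A *ᵥ w) + g 2 • w = 0 := by
      simpa [Fin.sum_univ_three, hcdef] using hg
    have h2' : g 2 • ((A * A) *ᵥ w) = 0 := by
      have := congrArg (fun x => (A * A) *ᵥ x) hg'
      simpa [Matrix.mulVec_add, Matrix.mulVec_smul, Matrix.mulVec_mulVec, hz1, hz2] using this
    have hg2 : g 2 = 0 := by
      rcases smul_eq_zero.mp h2' with h | h
      · exact h
      · exact absurd h hc0'
    have h1' : g 1 • ((A * A) *ᵥ w) = 0 := by
      have := congrArg (fun x => A *ᵥ x) hg'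
      simpa [Matrix.mulVec_add, Matrix.mulVec_smul, Matrix.mulVec_mulVec, hz3, hg2] using this
    have hg1 : g 1 = 0 := by
      rcases smul_eq_zero.mp h1' with h | h
      · exact h
      · exact absurd h hc0'
    have h0' : g 0 • ((A * A) *ᵥ w) = 0 := by
      rw [hg1, hg2] at hg'
      simpa using hg'
    have hg0 : g 0 = 0 := by
      rcases smul_eq_zero.mp h0' with h | h
      · exact h
      · exact absurd h hc0'
    intro i; fin_cases i <;> assumption
  obtain ⟨g, hg⟩ := exists_gl_cols c hli
  have hAc : ∀ l : Fin 3, A *ᵥ c l = ![(0 : Fin 3 → K), (A*A) *ᵥ w, A *ᵥ w] l := by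
    intro l
    fin_cases l
    · show A *ᵥ ((A * A) *ᵥ w) = 0
      rw [Matrix.mulVec_mulVec]
      have : A * (A * A) = A * A * A := by noncomm_ring
      rw [this, h3, Matrix.zero_mulVec]
    · show A *ᵥ (A *ᵥ w) = (A * A) *ᵥ w
      rw [Matrix.mulVec_mulVec]
    · rfl
  have hmul : A * (g : Matrix (Fin 3) (Fin 3) K) = (g : Matrix (Fin 3) (Fin 3) K) * J3 K := by
    rw [hg]
    ext i l
    rw [mul_cols, hAc l]
    have hrhs : (Matrix.of (fun i j => c j i) * J3 K) i l
        = ![(0 : Fin 3 → K), c 0, c 1] l i := by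
      fin_cases l <;>
        simp [J3, Matrix.mul_apply, Fin.sum_univ_three, Matrix.of_apply] <;> norm_num
    rw [hrhs]
    fin_cases l <;> rfl
  refine ⟨(g : Matrix (Fin 3) (Fin 3) K), ((g⁻¹ : GL (Fin 3) K) : Matrix (Fin 3) (Fin 3) K),
    ?_, ?_, ?_⟩
  · exact g.mul_inv
  · exact g.inv_mul
  · rw [Matrix.mul_assoc, hmul, ← Matrix.mul_assoc]
    have : ((g⁻¹ : GL (Fin 3) K) : Matrix (Fin 3) (Fin 3) K) * (g : Matrix (Fin 3) (Fin 3) K) = 1 :=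
      g.inv_mul
    rw [this, Matrix.one_mul]







/-- The core geometric contradiction for triples of rank-one nilpotents. -/
lemma core (u v : Fin 3 → (Fin 3 → K)) (i j k : Fin 3)
    (hij : i ≠ j) (hjk : j ≠ k) (hik : i ≠ k)
    (hd : ∀ m, v m ⬝ᵥ u m = 0)
    (hp : ∀ a b : Fin 3, (v a ⬝ᵥ u b) * (v b ⬝ᵥ u a) = 0)
    (hcyc : (v i ⬝ᵥ u j) * (v j ⬝ᵥ u k) * (v k ⬝ᵥ u i) = 0) :
    (v i ⬝ᵥ u j) * (v j ⬝ᵥ u k) = 0 ∨ u i = 0 ∨ v k = 0 := by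
  by_contra hcon
  push_neg at hcon
  obtain ⟨hprod, hui, hvk⟩ := hcon
  have hxij : v i ⬝ᵥ u j ≠ 0 := fun h => hprod (by rw [h, zero_mul])
  have hxjk : v j ⬝ᵥ u k ≠ 0 := fun h => hprod (by rw [h, mul_zero])
  have hji : v j ⬝ᵥ u i = 0 := by
    rcases mul_eq_zero.mp (hp i j) with h | h
    · exact absurd h hxij
    · exact h
  have hkj : v k ⬝ᵥ u j = 0 := by
    rcases mul_eq_zero.mp (hp j k) with h | h
    · exact absurd h hxjk
    · exact h
  have hki : v k ⬝ᵥ u i = 0 := by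
    rcases mul_eq_zero.mp hcyc with h | h
    · exact absurd h hprod
    · exact h
  -- the u's are linearly independent
  have hli : LinearIndependent K ![u i, u j, u k] := by
    rw [Fintype.linearIndependent_iff]
    intro g hg
    have hg' : g 0 • u i + g 1 • u j + g 2 • u k = 0 := by
      simpa [Fin.sum_univ_three] using hg
    have hdj : g 2 * (v j ⬝ᵥ u k) = 0 := by
      have := congrArg (fun y => v j ⬝ᵥ y) hg'
      simpa [dotProduct_add, dotProduct_smul, hji, hd j, smul_eq_mul] using this
    have hg2 : g 2 = 0 := by
      rcases mul_eq_zero.mp hdj with h | h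
      · exact h
      · exact absurd h hxjk
    have hdi : g 1 * (v i ⬝ᵥ u j) = 0 := by
      have := congrArg (fun y => v i ⬝ᵥ y) hg'
      simpa [dotProduct_add, dotProduct_smul, hd i, hg2, smul_eq_mul] using this
    have hg1 : g 1 = 0 := by
      rcases mul_eq_zero.mp hdi with h | h
      · exact h
      · exact absurd h hxij
    have hg0 : g 0 = 0 := by
      rw [hg1, hg2] at hg'
      simp only [zero_smul, add_zero] at hg'
      rcases smul_eq_zero.mp hg' with h | h
      · exact h
      · exact absurd h hui
    intro m; fin_cases m <;> assumption
  have hcard : Fintype.card (Fin 3) = Module.finrank K (Fin 3 → K) := by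
    simp [Module.finrank_fin_fun]
  let b : Module.Basis (Fin 3) K (Fin 3 → K) := basisOfLinearIndependentOfCardEqFinrank hli hcard
  have hb : ⇑b = ![u i, u j, u k] := coe_basisOfLinearIndependentOfCardEqFinrank hli hcard
  apply hvk
  funext p
  have hrepr := b.sum_repr (Pi.single p (1 : K))
  have := congrArg (fun y => v k ⬝ᵥ y) hrepr
  simp only [Fin.sum_univ_three, dotProduct_add, dotProduct_smul, smul_eq_mul, hb] at this
  have hv0 : v k ⬝ᵥ ![u i, u j, u k] 0 = 0 := by
    show v k ⬝ᵥ u i = 0; exact hki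
  have hv1 : v k ⬝ᵥ ![u i, u j, u k] 1 = 0 := by
    show v k ⬝ᵥ u j = 0; exact hkj
  have hv2 : v k ⬝ᵥ ![u i, u j, u k] 2 = 0 := by
    show v k ⬝ᵥ u k = 0; exact hd k
  rw [hv0, hv1, hv2] at this
  simp only [mul_zero, add_zero, zero_add] at this
  have h0 : v k ⬝ᵥ Pi.single p 1 = 0 := by rw [← this]
  simpa [dotProduct_single] using h0














lemma words_case2 (α β : K) (hα : α ≠ 0) (hβ : β ≠ 0)
    (A : Fin 3 → Matrix (Fin 3) (Fin 3) K)
    (hsq0 : ∀ i, A i * A i = 0)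
    (htr0 : ∀ i, Matrix.trace (A i) = 0)
    (htr : ∀ i j : Fin 3, i ≠ j → Matrix.trace (A i * A j) = 0)
    (hcomb : α * Matrix.trace (A 0 * A 1 * A 2) + β * Matrix.trace (A 0 * A 2 * A 1) = 0) :
    ∀ i j k : Fin 3, A i * A j * A k = 0 := by
  have hdec : ∀ i, ∃ u v : Fin 3 → K, A i = vecMulVec u v := fun i => rank_one_decomp _ (hsq0 i)
  choose u v hA using hdec
  set x : Fin 3 → Fin 3 → K := fun i j => v i ⬝ᵥ u j with hx
  have hmul2 : ∀ i j, A i * A j = (x i j) • vecMulVec (u i) (v j) := by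
    intro i j; rw [hA i, hA j, vecMulVec_mul]
  have hmul3 : ∀ i j k, A i * A j * A k = (x i j * x j k) • vecMulVec (u i) (v k) := by
    intro i j k
    rw [hmul2 i j, hA k, Matrix.smul_mul, vecMulVec_mul, smul_smul]
  have htr3 : ∀ i j k, Matrix.trace (A i * A j * A k) = x i j * x j k * x k i := by
    intro i j k
    rw [hmul3, Matrix.trace_smul, trace_vecMulVec]
    simp [hx, smul_eq_mul, mul_assoc]
  have hd : ∀ m, x m m = 0 := by
    intro m
    have := htr0 m
    rw [hA m, trace_vecMulVec] at this
    exact this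
  have hp : ∀ a b : Fin 3, x a b * x b a = 0 := by
    intro a b
    rcases eq_or_ne a b with rfl | hab
    · rw [hd a, zero_mul]
    · have := htr a b hab
      rw [hmul2, Matrix.trace_smul, trace_vecMulVec] at this
      exact this
  have hcomb' : α * (x 0 1 * x 1 2 * x 2 0) + β * (x 0 2 * x 2 1 * x 1 0) = 0 := by
    rw [← htr3 0 1 2, ← htr3 0 2 1]
    exact hcomb
  have hTT' : (x 0 1 * x 1 2 * x 2 0) * (x 0 2 * x 2 1 * x 1 0) = 0 := by
    linear_combination (x 1 2 * x 2 0 * x 0 2 * x 2 1) * hp 0 1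
  have hT : x 0 1 * x 1 2 * x 2 0 = 0 := by
    have h2 : α * ((x 0 1 * x 1 2 * x 2 0) * (x 0 1 * x 1 2 * x 2 0)) = 0 := by
      linear_combination (x 0 1 * x 1 2 * x 2 0) * hcomb' - β * hTT'
    have h3 := (mul_eq_zero.mp h2).resolve_left hα
    exact pow_eq_zero_iff two_ne_zero |>.mp (by rw [pow_two]; exact h3)
  have hT' : x 0 2 * x 2 1 * x 1 0 = 0 := by
    have h2 : β * ((x 0 2 * x 2 1 * x 1 0) * (x 0 2 * x 2 1 * x 1 0)) = 0 := by
      linear_combination (x 0 2 * x 2 1 * x 1 0) * hcomb' - α * hTT'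
    have h3 := (mul_eq_zero.mp h2).resolve_left hβ
    exact pow_eq_zero_iff two_ne_zero |>.mp (by rw [pow_two]; exact h3)
  have keyprod : ∀ i j k : Fin 3, i ≠ j → j ≠ k → i ≠ k → x i j * x j k * x k i = 0 := by
    intro i j k hij hjk hik
    fin_cases i <;> fin_cases j <;> fin_cases k <;>
      simp only [Fin.zero_eta, Fin.mk_one, Fin.reduceFinMk] at hij hjk hik ⊢ <;>
      first
        | exact absurd rfl hij
        | exact absurd rfl hjk
        | exact absurd rfl hik
        | linear_combination hT
        | linear_combination hT'
  intro i j k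
  rw [hmul3]
  have hkey : x i j * x j k = 0 ∨ u i = 0 ∨ v k = 0 := by
    rcases eq_or_ne i j with rfl | hij
    · left; rw [hd i, zero_mul]
    · rcases eq_or_ne j k with rfl | hjk
      · left; rw [hd j, mul_zero]
      · rcases eq_or_ne i k with rfl | hik
        · left; exact hp i j
        · exact core u v i j k hij hjk hik hd hp (keyprod i j k hij hjk hik)
  rcases hkey with h | h | h
  · rw [h, zero_smul]
  · have : vecMulVec (u i) (v k) = 0 := by
      ext a b; simp [vecMulVec_apply, h]
    rw [this, smul_zero]
  · have : vecMulVec (u i) (v k) = 0 := by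
      ext a b; simp [vecMulVec_apply, h]
    rw [this, smul_zero]









lemma words (α β : K) (hα : α ≠ 0) (hβ : β ≠ 0)
    (A : Fin 3 → Matrix (Fin 3) (Fin 3) K)
    (hchar : ∀ i, (A i).charpoly = Polynomial.X ^ 3)
    (htr : ∀ i j : Fin 3, i < j → Matrix.trace (A i * A j) = 0)
    (hsq : ∀ i j : Fin 3, i ≠ j → Matrix.trace (A i ^ 2 * A j) = 0)
    (hsq2 : ∀ i j : Fin 3, i < j → Matrix.trace (A i ^ 2 * A j ^ 2) = 0)
    (hcomb : α * Matrix.trace (A 0 * A 1 * A 2) + β * Matrix.trace (A 0 * A 2 * A 1) = 0) :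
    ∀ i j k : Fin 3, A i * A j * A k = 0 := by
  have hcube : ∀ i, A i * A i * A i = 0 := fun i => cube_eq_zero _ (hchar i)
  have htr0 : ∀ i, Matrix.trace (A i) = 0 := fun i => trace_eq_zero _ (hchar i)
  have htrne : ∀ i j : Fin 3, i ≠ j → Matrix.trace (A i * A j) = 0 := by
    intro i j hij
    rcases hij.lt_or_gt with h | h
    · exact htr i j h
    · rw [Matrix.trace_mul_comm]; exact htr j i h
  by_cases hex : ∃ m, A m * A m ≠ 0
  · obtain ⟨m, hm⟩ := hex
    obtain ⟨P, Q, hPQ, hQP, hJ⟩ := case1_J3 (A m) hm (hcube m)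
    have hupper : ∀ r, ∀ k l : Fin 3, ¬ k < l → (Q * A r * P) k l = 0 := by
      intro r
      rcases eq_or_ne r m with rfl | hrm
      · rw [hJ]
        intro k l hkl
        simp only [J3, Matrix.of_apply, ite_eq_right_iff]
        intro h
        exfalso
        exact hkl (by rw [Fin.lt_def]; omega)
      · refine case1_upper (A m) (A r) P Q hPQ hJ (hcube r) (htrne m r (Ne.symm hrm)) ?_ ?_
        · have := hsq m r (Ne.symm hrm)
          rwa [pow_two] at this
        · rcases (Ne.symm hrm).lt_or_gt with h | h
          · have := hsq2 m r h
            rwa [pow_two, pow_two] at this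
          · have := hsq2 r m h
            rw [pow_two, pow_two] at this
            rwa [Matrix.trace_mul_comm] at this
    have hback : ∀ r, P * (Q * A r * P) * Q = A r := by
      intro r
      have e : P * (Q * A r * P) * Q = (P * Q) * A r * (P * Q) := by noncomm_ring
      rw [e, hPQ, Matrix.one_mul, Matrix.mul_one]
    intro i j k
    have h0 : (Q * A i * P) * (Q * A j * P) * (Q * A k * P) = 0 :=
      triple_strict_upper _ _ _ (hupper i) (hupper j) (hupper k)
    have h1 : (Q * A i * P) * (Q * A j * P) * (Q * A k * P) = Q * (A i * A j * A k) * P := by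
      rw [conj_mul' P Q _ _ hPQ, conj_mul' P Q _ _ hPQ]
    rw [h1] at h0
    have h2 := congrArg (fun X => P * X * Q) h0
    simp only [Matrix.mul_zero, Matrix.zero_mul] at h2
    have e : P * (Q * (A i * A j * A k) * P) * Q = (P * Q) * (A i * A j * A k) * (P * Q) := by
      noncomm_ring
    rw [e, hPQ, Matrix.one_mul, Matrix.mul_one] at h2
    exact h2
  · push_neg at hex
    have hsq0 : ∀ i, A i * A i = 0 := hex
    exact words_case2 α β hα hβ A hsq0 htr0 htrne hcomb









lemma li_of_flags (c : Fin 3 → (Fin 3 → K)) (h0 : c 0 ≠ 0)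
    (h1 : c 1 ∉ Submodule.span K {c 0})
    (h2 : c 2 ∉ Submodule.span K ({c 0, c 1} : Set (Fin 3 → K))) :
    LinearIndependent K c := by
  rw [Fintype.linearIndependent_iff]
  intro g hg
  have hg' : g 0 • c 0 + g 1 • c 1 + g 2 • c 2 = 0 := by
    simpa [Fin.sum_univ_three] using hg
  have hg2 : g 2 = 0 := by
    by_contra hne
    apply h2
    rw [Submodule.mem_span_pair]
    refine ⟨-(g 2)⁻¹ * g 0, -(g 2)⁻¹ * g 1, ?_⟩
    have h3 : (-(g 2)⁻¹ * g 0) • c 0 + (-(g 2)⁻¹ * g 1) • c 1 + (-(g 2)⁻¹ * g 2) • c 2 = 0 := by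
      have := congrArg (fun y => (-(g 2)⁻¹) • y) hg'
      simpa [smul_add, smul_smul, mul_comm] using this
    rw [show -(g 2)⁻¹ * g 2 = -1 by field_simp] at h3
    have h4 : (-(g 2)⁻¹ * g 0) • c 0 + (-(g 2)⁻¹ * g 1) • c 1 - c 2 = 0 := by
      rw [← h3]; module
    exact sub_eq_zero.mp h4
  have hg1 : g 1 = 0 := by
    by_contra hne
    apply h1
    rw [Submodule.mem_span_singleton]
    refine ⟨-(g 1)⁻¹ * g 0, ?_⟩
    rw [hg2, zero_smul, add_zero] at hg'
    have h3 : (-(g 1)⁻¹ * g 0) • c 0 + (-(g 1)⁻¹ * g 1) • c 1 = 0 := by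
      have := congrArg (fun y => (-(g 1)⁻¹) • y) hg'
      simpa [smul_add, smul_smul, mul_comm] using this
    rw [show -(g 1)⁻¹ * g 1 = -1 by field_simp] at h3
    have h4 : (-(g 1)⁻¹ * g 0) • c 0 - c 1 = 0 := by
      rw [← h3]; module
    exact sub_eq_zero.mp h4
  have hg0 : g 0 = 0 := by
    rw [hg1, hg2] at hg'
    simp only [zero_smul, add_zero] at hg'
    rcases smul_eq_zero.mp hg' with h | h
    · exact h
    · exact absurd h h0
  intro m; fin_cases m <;> assumption

lemma finrank_span_pair' (c0 c1 : Fin 3 → K) (hc0 : c0 ≠ 0)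
    (hns : c1 ∉ Submodule.span K {c0}) :
    Module.finrank K (Submodule.span K ({c0, c1} : Set (Fin 3 → K))) = 2 := by
  have hli : LinearIndependent K ![c1, c0] := by
    rw [linearIndependent_fin2]
    refine ⟨by simpa using hc0, fun a ha => ?_⟩
    apply hns
    rw [Submodule.mem_span_singleton]
    exact ⟨a, by simpa using ha⟩
  have hfr2 : Module.finrank K (Submodule.span K (Set.range ![c1, c0])) = 2 := by
    rw [finrank_span_eq_card hli]; simp
  have hset : Set.range ![c1, c0] = ({c0, c1} : Set (Fin 3 → K)) := by
    ext y
    constructor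
    · rintro ⟨m, rfl⟩
      fin_cases m
      · right; rfl
      · left; rfl
    · rintro (rfl | hy)
      · exact ⟨1, rfl⟩
      · rw [Set.mem_singleton_iff] at hy; subst hy; exact ⟨0, rfl⟩
  rw [← hset, hfr2]

lemma span_pair_eq (S : Submodule K (Fin 3 → K)) (hfr : Module.finrank K S = 2)
    (c0 c1 : Fin 3 → K) (h0 : c0 ∈ S) (h1 : c1 ∈ S) (hc0 : c0 ≠ 0)
    (hns : c1 ∉ Submodule.span K {c0}) :
    Submodule.span K ({c0, c1} : Set (Fin 3 → K)) = S := by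
  apply Submodule.eq_of_le_of_finrank_le
  · rw [Submodule.span_le]
    intro y hy
    rcases hy with rfl | hy
    · exact h0
    · rw [Set.mem_singleton_iff] at hy; subst hy; exact h1
  · rw [hfr, finrank_span_pair' c0 c1 hc0 hns]

/-- from vanishing of all triple products, a common triangularizing basis -/
lemma flag (A : Fin 3 → Matrix (Fin 3) (Fin 3) K)
    (hw : ∀ i j k : Fin 3, A i * A j * A k = 0) :
    ∃ g : GL (Fin 3) K, ∀ r, ∀ k l : Fin 3, ¬ k < l →
      (((g⁻¹ : GL (Fin 3) K) : Matrix (Fin 3) (Fin 3) K) * A r *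
        ((g : GL (Fin 3) K) : Matrix (Fin 3) (Fin 3) K)) k l = 0 := by
  classical
  set L : Fin 3 → ((Fin 3 → K) →ₗ[K] (Fin 3 → K)) := fun i => (A i).mulVecLin with hL
  set W1 : Submodule K (Fin 3 → K) := ⨆ i, LinearMap.range (L i) with hW1
  set W2 : Submodule K (Fin 3 → K) :=
    ⨆ p : Fin 3 × Fin 3, LinearMap.range ((L p.1) ∘ₗ (L p.2)) with hW2
  have f_ran : ∀ (m : Fin 3) (x : Fin 3 → K), L m x ∈ W1 := by
    intro m x
    exact Submodule.mem_iSup_of_mem m (LinearMap.mem_range_self _ x)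
  have f12 : ∀ (m : Fin 3), ∀ x ∈ W1, L m x ∈ W2 := by
    intro m x hx
    have hmap : Submodule.map (L m) W1 ≤ W2 := by
      rw [hW1, Submodule.map_iSup]
      apply iSup_le
      intro i
      rw [← LinearMap.range_comp]
      exact le_iSup (fun p : Fin 3 × Fin 3 => LinearMap.range ((L p.1) ∘ₗ (L p.2))) (m, i)
    exact hmap (Submodule.mem_map_of_mem hx)
  have hcomp3 : ∀ m p1 p2 : Fin 3, (L m) ∘ₗ ((L p1) ∘ₗ (L p2)) = 0 := by
    intro m p1 p2
    have : (A m * A p1 * A p2).mulVecLin = (L m) ∘ₗ ((L p1) ∘ₗ (L p2)) := by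
      rw [hL]
      rw [Matrix.mul_assoc, Matrix.mulVecLin_mul, Matrix.mulVecLin_mul]
    rw [← this, hw m p1 p2]
    ext y
    simp
  have f20 : ∀ (m : Fin 3), ∀ x ∈ W2, L m x = 0 := by
    intro m x hx
    rw [hW2] at hx
    induction hx using Submodule.iSup_induction' with
    | mem p y hy =>
        obtain ⟨z, rfl⟩ := hy
        have := congrArg (fun f => f z) (hcomp3 m p.1 p.2)
        simpa using this
    | zero => simp
    | add y hy z hz hy' hz' => rw [map_add, hy', hz', add_zero]
  have h21 : W2 ≤ W1 := by
    rw [hW2]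
    apply iSup_le
    intro p
    refine le_trans (LinearMap.range_comp_le_range _ _) ?_
    exact le_iSup (fun i => LinearMap.range (L i)) p.1
  have hV3 : Module.finrank K (Fin 3 → K) = 3 := Module.finrank_fin_fun K
  by_cases hbot : W1 = ⊥
  · -- all matrices are zero
    have hA0 : ∀ r, A r = 0 := by
      intro r
      ext i j
      have : L r (Pi.single j 1) = 0 := by
        have := f_ran r (Pi.single j 1)
        rw [hbot] at this
        simpa using this
      have := congrFun this i
      simpa [hL, Matrix.mulVecLin_apply, Matrix.mulVec_single] using this
    refine ⟨1, ?_⟩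
    intro r k l _
    simp [hA0 r]
  -- W1 is proper
  have htop : W1 ≠ ⊤ := by
    intro htop
    have hW1le : W1 ≤ W2 := by
      rw [hW1]
      apply iSup_le
      intro i
      rintro x ⟨y, rfl⟩
      exact f12 i y (by rw [htop]; trivial)
    have hzero : ∀ m x, L m x = 0 := fun m x => f20 m x (hW1le (by rw [htop]; trivial))
    apply hbot
    rw [hW1]
    apply le_bot_iff.mp
    apply iSup_le
    intro i
    rintro x ⟨y, rfl⟩
    rw [hzero i y]
    exact Submodule.zero_mem ⊥
  have hlt : W2 < W1 := by
    rcases lt_or_eq_of_le h21 with h | h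
    · exact h
    · exfalso
      apply hbot
      have hW2bot : W2 = ⊥ := by
        apply le_bot_iff.mp
        rw [hW2]
        apply iSup_le
        intro p
        rintro x ⟨y, rfl⟩
        have : L p.2 y ∈ W2 := by rw [h]; exact f_ran p.2 y
        have := f20 p.1 _ this
        simp only [LinearMap.coe_comp, Function.comp_apply]
        rw [this]
        exact Submodule.zero_mem ⊥
      rw [← h, hW2bot]
  have hd1pos : Module.finrank K W1 ≠ 0 := fun h => hbot (Submodule.finrank_eq_zero.mp h)
  have hd1lt : Module.finrank K W1 < 3 := by
    have := Submodule.finrank_lt (K := K) (V := Fin 3 → K) htop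
    rwa [hV3] at this
  have hd2lt : Module.finrank K W2 < Module.finrank K W1 :=
    Submodule.finrank_lt_finrank_of_lt hlt
  -- choose the flag vectors
  have main : ∃ c : Fin 3 → (Fin 3 → K), LinearIndependent K c ∧
      (∀ r, L r (c 0) = 0) ∧
      (∀ r, L r (c 1) ∈ Submodule.span K {c 0}) ∧
      (∀ r, L r (c 2) ∈ Submodule.span K ({c 0, c 1} : Set (Fin 3 → K))) := by
    rcases Nat.lt_or_ge (Module.finrank K W1) 2 with hd1 | hd1
    · -- finrank W1 = 1, W2 = ⊥
      have hd1' : Module.finrank K W1 = 1 := by omega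
      have hd2' : W2 = ⊥ := Submodule.finrank_eq_zero.mp (by omega)
      obtain ⟨c0, hc0mem, hc0ne⟩ := Submodule.exists_mem_ne_zero_of_ne_bot hbot
      have hspan0 : Submodule.span K {c0} = W1 := by
        apply Submodule.eq_of_le_of_finrank_le
        · rwa [Submodule.span_singleton_le_iff_mem]
        · rw [hd1', finrank_span_singleton hc0ne]
      obtain ⟨c1, hc1⟩ : ∃ c1, c1 ∉ W1 := by
        by_contra hcon
        push_neg at hcon
        exact htop (Submodule.eq_top_iff'.mpr hcon)
      have hc1ns : c1 ∉ Submodule.span K {c0} := fun hmem => hc1 (hspan0 ▸ hmem)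
      have hpairne : Submodule.span K ({c0, c1} : Set (Fin 3 → K)) ≠ ⊤ := by
        intro hcon
        have h2' := finrank_span_pair' c0 c1 hc0ne hc1ns
        rw [hcon, finrank_top, hV3] at h2'
        exact absurd h2' (by norm_num)
      obtain ⟨c2, hc2⟩ : ∃ c2, c2 ∉ Submodule.span K ({c0, c1} : Set (Fin 3 → K)) := by
        by_contra hcon
        push_neg at hcon
        exact hpairne (Submodule.eq_top_iff'.mpr hcon)
      refine ⟨![c0, c1, c2], ?_, ?_, ?_, ?_⟩
      · apply li_of_flags <;> simp only [Matrix.cons_val_zero, Matrix.cons_val_one,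
          Matrix.head_cons, Matrix.cons_val_two, Matrix.tail_cons]
        · exact hc0ne
        · exact hc1ns
        · exact hc2
      · intro r
        show L r c0 = 0
        have := f12 r c0 hc0mem
        rw [hd2'] at this
        simpa using this
      · intro r
        show L r c1 ∈ Submodule.span K {c0}
        rw [hspan0]
        exact f_ran r c1
      · intro r
        show L r c2 ∈ Submodule.span K ({c0, c1} : Set (Fin 3 → K))
        apply Submodule.span_mono (Set.singleton_subset_iff.mpr (Set.mem_insert c0 {c1}))
        rw [hspan0]
        exact f_ran r c2
    · -- finrank W1 = 2
      have hd1' : Module.finrank K W1 = 2 := by omega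
      have hd2le : Module.finrank K W2 ≤ 1 := by omega
      -- choose c0 : W2 generator if W2 ≠ ⊥, else any nonzero elt of W1
      obtain ⟨c0, hc0W1, hc0ne, hc0ker, hc0span⟩ :
          ∃ c0, c0 ∈ W1 ∧ c0 ≠ 0 ∧ (∀ r, L r c0 = 0) ∧ W2 ≤ Submodule.span K {c0} := by
        by_cases hW2bot : W2 = ⊥
        · obtain ⟨c0, hc0mem, hc0ne⟩ := Submodule.exists_mem_ne_zero_of_ne_bot hbot
          refine ⟨c0, hc0mem, hc0ne, ?_, by rw [hW2bot]; exact bot_le⟩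
          intro r
          have := f12 r c0 hc0mem
          rw [hW2bot] at this
          simpa using this
        · obtain ⟨c0, hc0mem, hc0ne⟩ := Submodule.exists_mem_ne_zero_of_ne_bot hW2bot
          have hd2' : Module.finrank K W2 = 1 := by
            have : Module.finrank K W2 ≠ 0 := fun h => hW2bot (Submodule.finrank_eq_zero.mp h)
            omega
          have hspan2 : Submodule.span K {c0} = W2 := by
            apply Submodule.eq_of_le_of_finrank_le
            · rwa [Submodule.span_singleton_le_iff_mem]
            · rw [hd2', finrank_span_singleton hc0ne]
          exact ⟨c0, h21 hc0mem, hc0ne, fun r => f20 r c0 hc0mem, le_of_eq hspan2.symm⟩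
      have hlt0 : Submodule.span K {c0} < W1 := by
        have hle : Submodule.span K {c0} ≤ W1 :=
          (Submodule.span_singleton_le_iff_mem c0 W1).mpr hc0W1
        refine lt_of_le_of_ne hle ?_
        intro heq
        rw [← heq, finrank_span_singleton hc0ne] at hd1'
        exact absurd hd1' (by norm_num)
      obtain ⟨c1, hc1W1, hc1ns⟩ : ∃ c1, c1 ∈ W1 ∧ c1 ∉ Submodule.span K {c0} := by
        obtain ⟨c1, hc1, hc1'⟩ := SetLike.exists_of_lt hlt0
        exact ⟨c1, hc1, hc1'⟩
      have hpair : Submodule.span K ({c0, c1} : Set (Fin 3 → K)) = W1 :=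
        span_pair_eq W1 hd1' c0 c1 hc0W1 hc1W1 hc0ne hc1ns
      obtain ⟨c2, hc2⟩ : ∃ c2, c2 ∉ W1 := by
        by_contra hcon
        push_neg at hcon
        exact htop (Submodule.eq_top_iff'.mpr hcon)
      refine ⟨![c0, c1, c2], ?_, ?_, ?_, ?_⟩
      · apply li_of_flags <;> simp only [Matrix.cons_val_zero, Matrix.cons_val_one,
          Matrix.head_cons, Matrix.cons_val_two, Matrix.tail_cons]
        · exact hc0ne
        · exact hc1ns
        · rw [hpair]; exact hc2
      · intro r; exact hc0ker r
      · intro r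
        show L r c1 ∈ Submodule.span K {c0}
        exact hc0span (f12 r c1 hc1W1)
      · intro r
        show L r c2 ∈ Submodule.span K ({c0, c1} : Set (Fin 3 → K))
        rw [hpair]
        exact f_ran r c2
  -- build the group element
  obtain ⟨c, hli, hk0, hk1, hk2⟩ := main
  obtain ⟨g, hg⟩ := exists_gl_cols c hli
  refine ⟨g, ?_⟩
  intro r
  -- coefficients
  obtain ⟨s, hs⟩ := Submodule.mem_span_singleton.mp (hk1 r)
  obtain ⟨p, q, hpq⟩ := Submodule.mem_span_pair.mp (hk2 r)
  set U : Matrix (Fin 3) (Fin 3) K :=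
    Matrix.of (fun k l => ![![0, s, p], ![0, 0, q], ![0, 0, 0]] k l) with hU
  have hAP : A r * (g : Matrix (Fin 3) (Fin 3) K) = (g : Matrix (Fin 3) (Fin 3) K) * U := by
    rw [hg]
    ext i l
    rw [mul_cols]
    have hrhs : (Matrix.of (fun i j => c j i) * U) i l
        = (![(0 : Fin 3 → K), s • c 0, p • c 0 + q • c 1] l) i := by
      fin_cases l <;>
        simp [hU, Matrix.mul_apply, Fin.sum_univ_three, Matrix.of_apply, Matrix.vecHead,
          Matrix.vecTail, Function.comp] <;> ring
    rw [hrhs]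
    fin_cases l
    · show ((A r) *ᵥ c 0) i = _
      have : (A r) *ᵥ c 0 = 0 := hk0 r
      rw [this]; rfl
    · show ((A r) *ᵥ c 1) i = _
      have : (A r) *ᵥ c 1 = s • c 0 := hs.symm
      rw [this]; rfl
    · show ((A r) *ᵥ c 2) i = _
      have : (A r) *ᵥ c 2 = p • c 0 + q • c 1 := hpq.symm
      rw [this]; rfl
  have hconj : ((g⁻¹ : GL (Fin 3) K) : Matrix (Fin 3) (Fin 3) K) * A r *
      ((g : GL (Fin 3) K) : Matrix (Fin 3) (Fin 3) K) = U := by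
    rw [Matrix.mul_assoc, hAP, ← Matrix.mul_assoc]
    have : ((g⁻¹ : GL (Fin 3) K) : Matrix (Fin 3) (Fin 3) K) *
        ((g : GL (Fin 3) K) : Matrix (Fin 3) (Fin 3) K) = 1 := g.inv_mul
    rw [this, Matrix.one_mul]
  rw [hconj]
  intro k l hkl
  fin_cases k <;> fin_cases l <;> first
    | rfl
    | exact absurd (by decide) hkl






lemma scale [Infinite K] (A : Fin 3 → Matrix (Fin 3) (Fin 3) K) (g : GL (Fin 3) K)
    (hup : ∀ r, ∀ k l : Fin 3, ¬ k < l →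
      (((g⁻¹ : GL (Fin 3) K) : Matrix (Fin 3) (Fin 3) K) * A r *
        ((g : GL (Fin 3) K) : Matrix (Fin 3) (Fin 3) K)) k l = 0)
    (f : MvPolynomial (Fin 3 × Fin 3 × Fin 3) K)
    (hf : ∀ (h : GL (Fin 3) K) (B : Fin 3 → Matrix (Fin 3) (Fin 3) K),
      evalPt (fun r => (h : Matrix (Fin 3) (Fin 3) K) * B r *
        ((↑h⁻¹ : Matrix (Fin 3) (Fin 3) K))) f = evalPt B f)
    (hc0 : MvPolynomial.coeff 0 f = 0) : evalPt A f = 0 := by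
  classical
  set gm : Matrix (Fin 3) (Fin 3) K := (g : Matrix (Fin 3) (Fin 3) K) with hgm
  set gi : Matrix (Fin 3) (Fin 3) K := ((g⁻¹ : GL (Fin 3) K) : Matrix (Fin 3) (Fin 3) K) with hgi
  have hginv : gm * gi = 1 := g.mul_inv
  have hginv' : gi * gm = 1 := g.inv_mul
  set M : Fin 3 → Matrix (Fin 3) (Fin 3) K := fun r => gi * A r * gm with hM
  have hA : ∀ r, A r = gm * M r * gi := by
    intro r
    have e : gm * (gi * A r * gm) * gi = (gm * gi) * A r * (gm * gi) := by noncomm_ring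
    rw [hM, e, hginv, Matrix.one_mul, Matrix.mul_one]
  set N : Fin 3 → Matrix (Fin 3) (Fin 3) (Polynomial K) :=
    fun r => Matrix.of (fun k l => Polynomial.C (M r k l) * Polynomial.X ^ (l.val - k.val))
    with hN
  set E : Fin 3 → Matrix (Fin 3) (Fin 3) (Polynomial K) :=
    fun r => (gm.map Polynomial.C) * N r * (gi.map Polynomial.C) with hE
  set P : Polynomial K :=
    MvPolynomial.aeval (fun pr : Fin 3 × Fin 3 × Fin 3 => (E pr.1) pr.2.1 pr.2.2) f with hP
  have hev : ∀ t : K, Polynomial.eval t P =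
      MvPolynomial.eval (fun pr : Fin 3 × Fin 3 × Fin 3 =>
        Polynomial.eval t ((E pr.1) pr.2.1 pr.2.2)) f := by
    intro t
    rw [hP, MvPolynomial.aeval_def]
    have h2 := MvPolynomial.eval₂_comp_left (Polynomial.evalRingHom t)
      (algebraMap K (Polynomial K))
      (fun pr : Fin 3 × Fin 3 × Fin 3 => (E pr.1) pr.2.1 pr.2.2) f
    have hid : (Polynomial.evalRingHom t).comp (algebraMap K (Polynomial K)) = RingHom.id K := by
      ext a
      simp
    rw [hid] at h2
    rw [show Polynomial.eval t (MvPolynomial.eval₂ (algebraMap K (Polynomial K))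
      (fun pr : Fin 3 × Fin 3 × Fin 3 => (E pr.1) pr.2.1 pr.2.2) f) = Polynomial.evalRingHom t
      (MvPolynomial.eval₂ (algebraMap K (Polynomial K))
      (fun pr : Fin 3 × Fin 3 × Fin 3 => (E pr.1) pr.2.1 pr.2.2) f) from rfl, h2]
    rw [MvPolynomial.eval₂_id]
    rfl
  have hMup : ∀ r, ∀ k l : Fin 3, ¬ k < l → M r k l = 0 := by
    intro r k l hkl
    exact hup r k l hkl
  have hPt : ∀ t : K, t ≠ 0 → Polynomial.eval t P = evalPt A f := by
    intro t ht
    set Dt : Matrix (Fin 3) (Fin 3) K := Matrix.diagonal ![t * t, t, 1] with hDt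
    set Dt' : Matrix (Fin 3) (Fin 3) K := Matrix.diagonal ![t⁻¹ * t⁻¹, t⁻¹, 1] with hDt'
    have hDD : Dt * Dt' = 1 := by
      rw [hDt, hDt', Matrix.diagonal_mul_diagonal]
      rw [show (fun i => ![t * t, t, 1] i * ![t⁻¹ * t⁻¹, t⁻¹, 1] i) = fun _ => (1 : K) from
        funext fun i => by fin_cases i <;> simp <;> field_simp]
      exact Matrix.diagonal_one
    have hDD' : Dt' * Dt = 1 := by
      rw [hDt, hDt', Matrix.diagonal_mul_diagonal]
      rw [show (fun i => ![t⁻¹ * t⁻¹, t⁻¹, 1] i * ![t * t, t, 1] i) = fun _ => (1 : K) from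
        funext fun i => by fin_cases i <;> simp <;> field_simp]
      exact Matrix.diagonal_one
    set du : (Matrix (Fin 3) (Fin 3) K)ˣ := ⟨Dt, Dt', hDD, hDD'⟩ with hdu
    set gu : GL (Fin 3) K := g * du * g⁻¹ with hgu
    have hguval : (gu : Matrix (Fin 3) (Fin 3) K) = gm * Dt * gi := rfl
    have hguinv : ((gu⁻¹ : GL (Fin 3) K) : Matrix (Fin 3) (Fin 3) K) = gm * Dt' * gi := by
      rw [hgu]
      simp only [_root_.mul_inv_rev, inv_inv]
      rw [show ((g * (du⁻¹ * g⁻¹) : GL (Fin 3) K) : Matrix (Fin 3) (Fin 3) K)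
        = gm * ((du⁻¹ : (Matrix (Fin 3) (Fin 3) K)ˣ) : Matrix (Fin 3) (Fin 3) K) * gi from by
          rw [Units.val_mul, Units.val_mul, Matrix.mul_assoc]]
      rfl
    have hNev : ∀ r, (N r).map (⇑(Polynomial.evalRingHom t)) = Dt * M r * Dt' := by
      intro r
      have h00 := hMup r 0 0 (by decide); have h10 := hMup r 1 0 (by decide)
      have h20 := hMup r 2 0 (by decide); have h11 := hMup r 1 1 (by decide)
      have h21 := hMup r 2 1 (by decide); have h22 := hMup r 2 2 (by decide)
      ext k l
      rw [Matrix.map_apply]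
      fin_cases k <;> fin_cases l <;>
        (try simp [hN, hDt, hDt', Matrix.mul_apply, Matrix.diagonal_apply, Fin.sum_univ_three,
          h00, h10, h20, h11, h21, h22]) <;>
        (try field_simp) <;> (try ring)
    have hEev : ∀ r, (E r).map (⇑(Polynomial.evalRingHom t)) = gm * (Dt * M r * Dt') * gi := by
      intro r
      rw [hE]
      simp only
      rw [Matrix.map_mul (f := Polynomial.evalRingHom t),
        Matrix.map_mul (f := Polynomial.evalRingHom t)]
      have h1 : (gm.map ⇑Polynomial.C).map ⇑(Polynomial.evalRingHom t) = gm := by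
        ext i j; simp [Matrix.map_apply]
      have h2 : (gi.map ⇑Polynomial.C).map ⇑(Polynomial.evalRingHom t) = gi := by
        ext i j; simp [Matrix.map_apply]
      rw [h1, h2, hNev]
    have hconj : ∀ r, gm * (Dt * M r * Dt') * gi =
        (gu : Matrix (Fin 3) (Fin 3) K) * A r * ((gu⁻¹ : GL (Fin 3) K) : Matrix (Fin 3) (Fin 3) K) := by
      intro r
      rw [hguval, hguinv, hA r]
      have e : gm * Dt * gi * (gm * M r * gi) * (gm * Dt' * gi) =
          gm * Dt * (gi * gm) * M r * (gi * gm) * Dt' * gi := by noncomm_ring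
      rw [e, hginv', Matrix.mul_one]
      noncomm_ring
    have hent : (fun pr : Fin 3 × Fin 3 × Fin 3 => Polynomial.eval t ((E pr.1) pr.2.1 pr.2.2)) =
        fun pr : Fin 3 × Fin 3 × Fin 3 =>
          ((gu : Matrix (Fin 3) (Fin 3) K) * A pr.1 *
            ((gu⁻¹ : GL (Fin 3) K) : Matrix (Fin 3) (Fin 3) K)) pr.2.1 pr.2.2 := by
      funext pr
      calc Polynomial.eval t ((E pr.1) pr.2.1 pr.2.2)
          = ((E pr.1).map (⇑(Polynomial.evalRingHom t))) pr.2.1 pr.2.2 := by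
            rw [Matrix.map_apply]; rfl
        _ = (gm * (Dt * M pr.1 * Dt') * gi) pr.2.1 pr.2.2 := by rw [hEev]
        _ = _ := by rw [hconj pr.1]
    rw [hev t, hent]
    exact hf gu A
  -- value at zero
  have hP0 : Polynomial.eval 0 P = 0 := by
    rw [hev 0]
    have hent0 : (fun pr : Fin 3 × Fin 3 × Fin 3 =>
        Polynomial.eval 0 ((E pr.1) pr.2.1 pr.2.2)) = fun _ => (0 : K) := by
      funext pr
      have hN0 : (N pr.1).map (⇑(Polynomial.evalRingHom (0 : K))) = 0 := by
        have h00 := hMup pr.1 0 0 (by decide); have h10 := hMup pr.1 1 0 (by decide)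
        have h20 := hMup pr.1 2 0 (by decide); have h11 := hMup pr.1 1 1 (by decide)
        have h21 := hMup pr.1 2 1 (by decide); have h22 := hMup pr.1 2 2 (by decide)
        ext k l
        rw [Matrix.map_apply]
        fin_cases k <;> fin_cases l <;>
          simp [hN, h00, h10, h20, h11, h21, h22]
      have hE0 : (E pr.1).map (⇑(Polynomial.evalRingHom (0 : K))) = 0 := by
        rw [hE]
        simp only
        rw [Matrix.map_mul (f := Polynomial.evalRingHom (0 : K)),
          Matrix.map_mul (f := Polynomial.evalRingHom (0 : K)), hN0,
          Matrix.mul_zero, Matrix.zero_mul]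
      calc Polynomial.eval 0 ((E pr.1) pr.2.1 pr.2.2)
          = ((E pr.1).map (⇑(Polynomial.evalRingHom (0 : K)))) pr.2.1 pr.2.2 := by
            rw [Matrix.map_apply]; rfl
        _ = 0 := by rw [hE0]; rfl
    rw [hent0]
    calc (MvPolynomial.eval fun _ : Fin 3 × Fin 3 × Fin 3 => (0 : K)) f
        = MvPolynomial.constantCoeff f := by rw [MvPolynomial.eval_zero']
      _ = MvPolynomial.coeff 0 f := by rw [MvPolynomial.constantCoeff_eq]
      _ = 0 := hc0
  -- P is constant
  have hroot : {x : K | Polynomial.IsRoot (P - Polynomial.C (evalPt A f)) x}.Infinite := by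
    apply Set.Infinite.mono ?_ ((Set.finite_singleton (0 : K)).infinite_compl)
    intro x hx
    have hxne : x ≠ 0 := hx
    show Polynomial.IsRoot _ x
    rw [Polynomial.IsRoot, Polynomial.eval_sub, Polynomial.eval_C, hPt x hxne, sub_self]
  have hQ : P - Polynomial.C (evalPt A f) = 0 :=
    Polynomial.eq_zero_of_infinite_isRoot _ hroot
  have hPC : P = Polynomial.C (evalPt A f) := by
    have := sub_eq_zero.mp hQ
    exact this
  have := hP0
  rw [hPC, Polynomial.eval_C] at this
  exact this


end Vanish

/-- Vanishing lemma for triples of `3 × 3` matrices (Lemma 4 of the paper). -/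
theorem vanishing_lemma_R33 (K : Type) [Field K] [Infinite K] (α β : K)
    (hα : α ≠ 0) (hβ : β ≠ 0) (A : Fin 3 → Matrix (Fin 3) (Fin 3) K)
    (hσ : ∀ (i : Fin 3) (k : ℕ), 1 ≤ k → k ≤ 3 → sigmaC k (A i) = 0)
    (htr : ∀ i j : Fin 3, i < j → Matrix.trace (A i * A j) = 0)
    (hsq : ∀ i j : Fin 3, i ≠ j → Matrix.trace (A i ^ 2 * A j) = 0)
    (hsq2 : ∀ i j : Fin 3, i < j → Matrix.trace (A i ^ 2 * A j ^ 2) = 0)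
    (hcomb : α * Matrix.trace (A 0 * A 1 * A 2) + β * Matrix.trace (A 0 * A 2 * A 1) = 0) :
    ∀ f ∈ invRing K 3 3, MvPolynomial.coeff 0 f = 0 → evalPt A f = 0 := by
  intro f hf hc0
  have hchar : ∀ i, (A i).charpoly = Polynomial.X ^ 3 :=
    fun i => Vanish.charpoly_eq (A i) (fun k h1 h3 => hσ i k h1 h3)
  have hw := Vanish.words α β hα hβ A hchar htr hsq hsq2 hcomb
  obtain ⟨g, hup⟩ := Vanish.flag A hw
  exact Vanish.scale A g hup f hf hc0
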